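/- For every pair of integers 2 ≤ k < n, there exists a k-connected graph on n vertices with exactly ⌈kn/2⌉ edges. -/

import Mathlib

set_option maxHeartbeats 1000000
open Finset

def hAdj (n k : ℕ) (x y : ZMod n) : Prop :=
  (∃ j : ℕ, 1 ≤ j ∧ j ≤ k / 2 ∧ (y = x + (j : ZMod n) ∨ x = y + (j : ZMod n)))
  ∨ (k % 2 = 1 ∧ n % 2 = 0 ∧ (y = x + ((n / 2 : ℕ) : ZMod n) ∨ x = y + ((n / 2 : ℕ) : ZMod n)))
  ∨ (k % 2 = 1 ∧ n % 2 = 1 ∧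
      ((y = x + (((n - 1) / 2 : ℕ) : ZMod n) ∧ x.val ≤ (n - 1) / 2) ∨
       (x = y + (((n - 1) / 2 : ℕ) : ZMod n) ∧ y.val ≤ (n - 1) / 2)))

def harary (n k : ℕ) : SimpleGraph (ZMod n) where
  Adj x y := x ≠ y ∧ hAdj n k x y
  symm := by
    constructor
    rintro x y ⟨hne, h⟩
    refine ⟨hne.symm, ?_⟩
    rcases h with ⟨j, h1, h2, h3⟩ | ⟨h1, h2, h3⟩ | ⟨h1, h2, h3⟩
    · exact Or.inl ⟨j, h1, h2, h3.symm⟩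
    · exact Or.inr (Or.inl ⟨h1, h2, h3.symm⟩)
    · exact Or.inr (Or.inr ⟨h1, h2, h3.symm⟩)
  loopless := ⟨fun x h => h.1 rfl⟩

noncomputable def offs (n k : ℕ) (x : ZMod n) : Finset ℕ :=
  (Finset.Icc 1 (k / 2) ∪ Finset.Icc (n - k / 2) (n - 1)) ∪
  (if k % 2 = 1 then
     (if n % 2 = 0 then {n / 2}
      else (if x.val ≤ (n - 1) / 2 then {(n - 1) / 2} else ∅) ∪
           (if (n - 1) / 2 ≤ x.val then {(n - 1) / 2 + 1} else ∅))
   else ∅)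

section
variable {n k : ℕ}

lemma casteq {a b : ℕ} (hab : a % n = b % n) : (a : ZMod n) = b := by
  rw [ZMod.natCast_eq_natCast_iff]; exact hab

lemma cast_comp (hn : 0 < n) {d : ℕ} (hd : d ≤ n) : ((n - d : ℕ) : ZMod n) = -(d : ZMod n) := by
  have h : ((n - d : ℕ) : ZMod n) + (d : ZMod n) = 0 := by
    rw [← Nat.cast_add]
    have h2 : n - d + d = n := by omega
    rw [h2, ZMod.natCast_self]
  exact eq_neg_of_add_eq_zero_left h

lemma ne_add_cast (hn : 0 < n) (x : ZMod n) {d : ℕ} (h1 : 1 ≤ d) (h2 : d < n) :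
    x ≠ x + (d : ZMod n) := by
  haveI : NeZero n := ⟨hn.ne'⟩
  intro h
  have h0 : (d : ZMod n) = 0 := by
    have := (left_eq_add).mp h
    exact this
  have := ZMod.val_natCast (n := n) d
  rw [h0, ZMod.val_zero, Nat.mod_eq_of_lt h2] at this
  omega

lemma add_cast_add (x : ZMod n) (a b : ℕ) :
    x + (a : ZMod n) + (b : ZMod n) = x + ((a + b : ℕ) : ZMod n) := by
  rw [add_assoc, ← Nat.cast_add]

lemma harary_neighbor [NeZero n] (hk : 2 ≤ k) (hkn : k < n) [DecidableRel (harary n k).Adj] (x : ZMod n) :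
    (harary n k).neighborFinset x = (offs n k x).image (fun d : ℕ => x + (d : ZMod n)) := by
  have hn : 0 < n := by omega
  have hxlt : x.val < n := ZMod.val_lt x
  ext y
  rw [SimpleGraph.mem_neighborFinset, Finset.mem_image]
  constructor
  · rintro ⟨hne, hadj⟩
    rcases hadj with ⟨j, hj1, hj2, hj3 | hj3⟩ | ⟨hk2, hn2, hj3 | hj3⟩ |
      ⟨hk2, hn2, ⟨hj3, hxv⟩ | ⟨hj3, hyv⟩⟩
    · exact ⟨j, by simp only [offs, mem_union, mem_Icc]; omega, hj3.symm⟩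
    · refine ⟨n - j, by simp only [offs, mem_union, mem_Icc]; omega, ?_⟩
      rw [cast_comp hn (by omega), hj3, add_assoc, add_neg_cancel, add_zero]
    · exact ⟨n / 2, by simp only [offs, mem_union, mem_Icc]
                       right; rw [if_pos hk2, if_pos hn2]; simp, hj3.symm⟩
    · refine ⟨n / 2, by simp only [offs, mem_union, mem_Icc]
                        right; rw [if_pos hk2, if_pos hn2]; simp, ?_⟩
      rw [hj3, add_assoc, ← Nat.cast_add]
      have : n / 2 + n / 2 = n := by omega
      rw [this, ZMod.natCast_self, add_zero]
    · refine ⟨(n - 1) / 2, ?_, hj3.symm⟩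
      simp only [offs, mem_union, mem_Icc]
      right; rw [if_pos hk2, if_neg (by omega), if_pos hxv]
      simp
    · -- x = y + m', y.val ≤ m' ; offset m'+1, need m' ≤ x.val
      have hm : (n - 1) / 2 < n := by omega
      have hxval : x.val = y.val + (n - 1) / 2 := by
        rw [hj3, ZMod.val_add, ZMod.val_natCast, Nat.mod_eq_of_lt hm,
          Nat.mod_eq_of_lt (by omega)]
      refine ⟨(n - 1) / 2 + 1, ?_, ?_⟩
      · simp only [offs, mem_union, mem_Icc]
        right; rw [if_pos hk2, if_neg (by omega)]
        simp only [Finset.mem_union]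
        right
        rw [if_pos (by omega)]
        simp
      · rw [hj3, add_assoc, ← Nat.cast_add]
        have : (n - 1) / 2 + ((n - 1) / 2 + 1) = n := by omega
        rw [this, ZMod.natCast_self, add_zero]
  · rintro ⟨d, hd, rfl⟩
    have hmem := hd
    simp only [offs, mem_union, mem_Icc] at hmem
    have hdb : 1 ≤ d ∧ d ≤ n - 1 := by
      rcases hmem with (h | h) | h
      · omega
      · omega
      · split at h
        · split at h
          · simp only [Finset.mem_singleton] at h; omega
          · simp only [Finset.mem_union] at h
            rcases h with h | h <;> split at h <;>
              simp only [Finset.mem_singleton, Finset.notMem_empty] at h <;> omega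
        · simp at h
    refine ⟨(ne_add_cast hn x (d := d) (by omega) (by omega)), ?_⟩
    rcases hmem with (h | h) | h
    · exact Or.inl ⟨d, by omega, by omega, Or.inl rfl⟩
    · refine Or.inl ⟨n - d, by omega, by omega, Or.inr ?_⟩
      rw [add_assoc, ← Nat.cast_add]
      have : d + (n - d) = n := by omega
      rw [this, ZMod.natCast_self, add_zero]
    · have hk2 : k % 2 = 1 := by
        by_contra hc
        rw [if_neg hc] at h
        simp at h
      rw [if_pos hk2] at h
      by_cases hn2 : n % 2 = 0
      · rw [if_pos hn2] at h
        simp only [Finset.mem_singleton] at h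
        subst h
        exact Or.inr (Or.inl ⟨hk2, hn2, Or.inl rfl⟩)
      · rw [if_neg hn2] at h
        have hn2' : n % 2 = 1 := by omega
        simp only [Finset.mem_union] at h
        rcases h with h | h
        · by_cases hxv : x.val ≤ (n - 1) / 2
          · rw [if_pos hxv] at h
            simp only [Finset.mem_singleton] at h
            subst h
            exact Or.inr (Or.inr ⟨hk2, hn2', Or.inl ⟨rfl, hxv⟩⟩)
          · rw [if_neg hxv] at h; simp at h
        · by_cases hxv : (n - 1) / 2 ≤ x.val
          · rw [if_pos hxv] at h
            simp only [Finset.mem_singleton] at h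
            subst h
            refine Or.inr (Or.inr ⟨hk2, hn2', Or.inr ⟨?_, ?_⟩⟩)
            · rw [add_assoc, ← Nat.cast_add]
              have : (n - 1) / 2 + 1 + (n - 1) / 2 = n := by omega
              rw [this, ZMod.natCast_self, add_zero]
            · rw [ZMod.val_add, ZMod.val_natCast, Nat.mod_eq_of_lt (show (n-1)/2+1 < n by omega)]
              rw [Nat.mod_eq_sub_mod (by omega), Nat.mod_eq_of_lt (by omega)]
              omega
          · rw [if_neg hxv] at h; simp at h
end

section
variable {n k : ℕ}

lemma offs_bounds' (hk : 2 ≤ k) (hkn : k < n) (x : ZMod n) :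
    ∀ d ∈ offs n k x, 1 ≤ d ∧ d ≤ n - 1 := by
  intro d hd
  simp only [offs, Finset.mem_union, Finset.mem_Icc] at hd
  rcases hd with (h | h) | h
  · omega
  · omega
  · split at h
    · split at h
      · simp only [Finset.mem_singleton] at h
        omega
      · simp only [Finset.mem_union] at h
        rcases h with h | h <;> split at h <;>
          simp only [Finset.mem_singleton, Finset.notMem_empty] at h <;> omega
    · simp at h

lemma offs_card {n k : ℕ} (hk : 2 ≤ k) (hkn : k < n) (x : ZMod n) :
    (offs n k x).card =
      if k % 2 = 1 ∧ n % 2 = 1 ∧ x.val = (n - 1) / 2 then k + 1 else k := by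
  have hr1 : 1 ≤ k / 2 := by omega
  have h2r : 2 * (k / 2) < n := by omega
  have hc1 : (Finset.Icc 1 (k / 2)).card = k / 2 := by rw [Nat.card_Icc]; omega
  have hc2 : (Finset.Icc (n - k / 2) (n - 1)).card = k / 2 := by rw [Nat.card_Icc]; omega
  have hdisj : Disjoint (Finset.Icc 1 (k / 2)) (Finset.Icc (n - k / 2) (n - 1)) := by
    rw [Finset.disjoint_left]
    intro a ha hb
    simp only [Finset.mem_Icc] at ha hb
    omega
  have hcirc : (Finset.Icc 1 (k / 2) ∪ Finset.Icc (n - k / 2) (n - 1)).card = 2 * (k / 2) := by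
    rw [Finset.card_union_of_disjoint hdisj, hc1, hc2]; omega
  have hmemcirc : ∀ a, a ∈ Finset.Icc 1 (k / 2) ∪ Finset.Icc (n - k / 2) (n - 1) →
      1 ≤ a ∧ a ≤ n - 1 ∧ (a ≤ k / 2 ∨ n - k / 2 ≤ a) := by
    intro a ha
    simp only [Finset.mem_union, Finset.mem_Icc] at ha
    omega
  unfold offs
  rcases Nat.even_or_odd k with hke | hko
  · have hk2 : k % 2 = 0 := Nat.even_iff.mp hke
    rw [if_neg (by omega), if_neg (by simp [hk2]), Finset.union_empty, hcirc]
    omega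
  · have hk2 : k % 2 = 1 := Nat.odd_iff.mp hko
    rw [if_pos hk2]
    rcases Nat.even_or_odd n with hne | hno
    · have hn2 : n % 2 = 0 := Nat.even_iff.mp hne
      rw [if_pos hn2, if_neg (by omega)]
      rw [Finset.card_union_of_disjoint, hcirc]
      · simp only [Finset.card_singleton]; omega
      · rw [Finset.disjoint_left]
        intro a ha hb
        simp only [Finset.mem_singleton] at hb
        have := hmemcirc a ha
        omega
    · have hn2 : n % 2 = 1 := Nat.odd_iff.mp hno
      rw [if_neg (by omega)]
      have hrm : k / 2 < (n - 1) / 2 := by omega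
      rcases Nat.lt_trichotomy x.val ((n - 1) / 2) with hx | hx | hx
      · rw [if_pos (by omega), if_neg (by omega), Finset.union_empty,
          Finset.card_union_of_disjoint, hcirc]
        · rw [if_neg (by omega)]
          simp only [Finset.card_singleton]; omega
        · rw [Finset.disjoint_left]; intro a ha hb
          simp only [Finset.mem_singleton] at hb
          have := hmemcirc a ha; omega
      · rw [if_pos (by omega), if_pos (by omega), if_pos (by omega)]
        rw [Finset.card_union_of_disjoint, hcirc]
        · rw [Finset.card_union_of_disjoint (by simp)]
          simp only [Finset.card_singleton]; omega
        · rw [Finset.disjoint_left]; intro a ha hb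
          simp only [Finset.mem_union, Finset.mem_singleton] at hb
          have := hmemcirc a ha; rcases hb with hb | hb <;> omega
      · rw [if_neg (by omega), if_pos (by omega), Finset.empty_union,
          Finset.card_union_of_disjoint, hcirc]
        · rw [if_neg (by omega)]
          simp only [Finset.card_singleton]; omega
        · rw [Finset.disjoint_left]; intro a ha hb
          simp only [Finset.mem_singleton] at hb
          have := hmemcirc a ha; omega

lemma harary_degree [NeZero n] (hk : 2 ≤ k) (hkn : k < n) [DecidableRel (harary n k).Adj]
    (x : ZMod n) :
    (harary n k).degree x =
      if k % 2 = 1 ∧ n % 2 = 1 ∧ x.val = (n - 1) / 2 then k + 1 else k := by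
  rw [← offs_card (n := n) (k := k) hk hkn x]
  rw [SimpleGraph.degree, harary_neighbor hk hkn x]
  apply Finset.card_image_of_injOn
  intro a ha b hb hab
  have hba := offs_bounds' hk hkn x a ha
  have hbb := offs_bounds' hk hkn x b hb
  have : (a : ZMod n) = b := by exact add_left_cancel hab
  rw [ZMod.natCast_eq_natCast_iff, Nat.ModEq, Nat.mod_eq_of_lt (by omega),
    Nat.mod_eq_of_lt (by omega)] at this
  exact this

lemma harary_count (hk : 2 ≤ k) (hkn : k < n) :
    (harary n k).edgeSet.ncard = (k * n + 1) / 2 := by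
  classical
  haveI : NeZero n := ⟨by omega⟩
  rw [← SimpleGraph.coe_edgeFinset, Set.ncard_coe_finset]
  have hsum := SimpleGraph.sum_degrees_eq_twice_card_edges (harary n k)
  have hdeg : ∀ x : ZMod n, (harary n k).degree x =
      if k % 2 = 1 ∧ n % 2 = 1 ∧ x.val = (n - 1) / 2 then k + 1 else k :=
    fun x => harary_degree hk hkn x
  rw [Finset.sum_congr rfl (fun x _ => hdeg x)] at hsum
  by_cases hpar : k % 2 = 1 ∧ n % 2 = 1
  · -- sum = k*n + 1
    have hsplit : ∀ x : ZMod n,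
        (if k % 2 = 1 ∧ n % 2 = 1 ∧ x.val = (n - 1) / 2 then k + 1 else k) =
        k + (if x.val = (n - 1) / 2 then 1 else 0) := by
      intro x
      by_cases hx : x.val = (n - 1) / 2
      · rw [if_pos ⟨hpar.1, hpar.2, hx⟩, if_pos hx]
      · rw [if_neg (by tauto), if_neg hx]
        omega
    rw [Finset.sum_congr rfl (fun x _ => hsplit x), Finset.sum_add_distrib,
      Finset.sum_const, Finset.sum_boole] at hsum
    have hfilter : (Finset.univ.filter (fun x : ZMod n => x.val = (n - 1) / 2)) =
        {(((n - 1) / 2 : ℕ) : ZMod n)} := by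
      ext z
      simp only [Finset.mem_filter, Finset.mem_univ, true_and, Finset.mem_singleton]
      constructor
      · intro hz
        have : ((z.val : ℕ) : ZMod n) = z := ZMod.natCast_rightInverse z
        rw [← this, hz]
      · intro hz
        rw [hz, ZMod.val_natCast, Nat.mod_eq_of_lt (by omega)]
    rw [hfilter] at hsum
    simp only [Finset.card_singleton, smul_eq_mul, Finset.card_univ,
      ZMod.card, Nat.cast_id] at hsum
    have hcomm : n * k = k * n := Nat.mul_comm n k
    omega
  · -- all degrees k, and k*n is even
    have hsplit : ∀ x : ZMod n,
        (if k % 2 = 1 ∧ n % 2 = 1 ∧ x.val = (n - 1) / 2 then k + 1 else k) = k := by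
      intro x
      rw [if_neg (by tauto)]
    rw [Finset.sum_congr rfl (fun x _ => hsplit x), Finset.sum_const] at hsum
    simp only [smul_eq_mul, Finset.card_univ, ZMod.card] at hsum
    have hkn_even : (k * n) % 2 = 0 := by
      have h2 : Even k ∨ Even n := by
        rw [Nat.even_iff, Nat.even_iff]
        by_contra hc
        push_neg at hc
        exact hpar ⟨by omega, by omega⟩
      exact Nat.even_iff.mp (Nat.even_mul.mpr h2)
    have hcomm : n * k = k * n := Nat.mul_comm n k
    omega

end

lemma mem_delverts {n k : ℕ} {S : Set (ZMod n)} {x : ZMod n} (hx : x ∉ S) :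
    x ∈ ((⊤ : (harary n k).Subgraph).deleteVerts S).verts := ⟨trivial, hx⟩

/-- Reachability in the graph with `S` deleted. -/
def Reach (n k : ℕ) (S : Set (ZMod n)) (x y : ZMod n) : Prop :=
  ∀ (hx : x ∉ S) (hy : y ∉ S),
    (((⊤ : (harary n k).Subgraph).deleteVerts S).coe).Reachable
      ⟨x, mem_delverts hx⟩ ⟨y, mem_delverts hy⟩

lemma Reach.refl {n k : ℕ} {S : Set (ZMod n)} (x : ZMod n) : Reach n k S x x :=
  fun _ _ => SimpleGraph.Reachable.refl _

lemma Reach.symm' {n k : ℕ} {S : Set (ZMod n)} {x y : ZMod n} (h : Reach n k S x y) :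
    Reach n k S y x := fun hy hx => (h hx hy).symm

lemma Reach.trans' {n k : ℕ} {S : Set (ZMod n)} {x y z : ZMod n}
    (h : Reach n k S x y) (h' : Reach n k S y z) (hy : y ∉ S) : Reach n k S x z :=
  fun hx hz => (h hx hy).trans (h' hy hz)

lemma Reach.of_adj {n k : ℕ} {S : Set (ZMod n)} {x y : ZMod n}
    (h : (harary n k).Adj x y) : Reach n k S x y := by
  intro hx hy
  apply SimpleGraph.Adj.reachable
  exact SimpleGraph.Subgraph.Adj.coe (by
    simp only [SimpleGraph.Subgraph.deleteVerts_adj, SimpleGraph.Subgraph.verts_top,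
      SimpleGraph.Subgraph.top_adj, Set.mem_univ, true_and]
    exact ⟨hx, hy, h⟩)

lemma adj_circ {n k : ℕ} (hn : 0 < n) (u : ZMod n) (j : ℕ) (h1 : 1 ≤ j) (h2 : j ≤ k / 2)
    (hjn : j < n) : (harary n k).Adj u (u + (j : ZMod n)) := by
  haveI : NeZero n := ⟨hn.ne'⟩
  constructor
  · intro h
    have h0 : (j : ZMod n) = 0 := by
      have := (left_eq_add).mp h
      exact this
    have := ZMod.val_natCast (n := n) j
    rw [h0, ZMod.val_zero, Nat.mod_eq_of_lt hjn] at this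
    omega
  · exact Or.inl ⟨j, h1, h2, Or.inl rfl⟩

/-- The jump lemma: if between `u` and `u + L` (going forward) there is no block of
`k/2` consecutive deleted vertices, then `u` and `u+L` are connected. -/
lemma jump {n k : ℕ} (hn : 0 < n) (hr : 1 ≤ k / 2) {S : Set (ZMod n)} :
    ∀ (L : ℕ) (u : ZMod n), u ∉ S → L ≠ 0 → L < n → (u + (L : ℕ) : ZMod n) ∉ S →
    (∀ s : ℕ, s + k / 2 < L → ∃ j : ℕ, 1 ≤ j ∧ j ≤ k / 2 ∧ (u + ((s + j : ℕ) : ZMod n)) ∉ S) →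
    Reach n k S u (u + (L : ℕ)) := by
  intro L
  induction L using Nat.strong_induction_on with
  | _ L IH =>
    intro u hu h0 hLn hv hcond
    rcases Nat.lt_or_ge (k / 2) L with hbig | hsmall
    · -- L > k/2 : find a first hop
      obtain ⟨j, hj1, hj2, hjS⟩ := hcond 0 (by omega)
      simp only [Nat.zero_add] at hjS
      have hjn : j < n := by omega
      have hadj : (harary n k).Adj u (u + (j : ZMod n)) := adj_circ hn u j hj1 hj2 hjn
      have hrest : Reach n k S (u + (j : ℕ)) ((u + (j : ℕ)) + ((L - j : ℕ) : ZMod n)) := by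
        apply IH (L - j) (by omega) _ hjS (by omega) (by omega)
        · -- endpoint
          have : (u + (j : ℕ)) + ((L - j : ℕ) : ZMod n) = u + (L : ℕ) := by
            rw [add_assoc]
            congr 1
            rw [← Nat.cast_add]
            congr 1
            omega
          rw [this]; exact hv
        · intro s hs
          obtain ⟨j', hj'1, hj'2, hj'S⟩ := hcond (j + s) (by omega)
          refine ⟨j', hj'1, hj'2, ?_⟩
          have : (u + (j:ℕ)) + ((s + j' : ℕ) : ZMod n) = u + ((j + s + j' : ℕ) : ZMod n) := by
            rw [add_assoc, ← Nat.cast_add]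
            congr 2
            omega
          rw [this]; exact hj'S
      have : (u + (j : ℕ)) + ((L - j : ℕ) : ZMod n) = u + (L : ℕ) := by
        rw [add_assoc, ← Nat.cast_add]; congr 2; omega
      rw [this] at hrest
      exact (Reach.of_adj hadj).trans' hrest hjS
    · -- direct edge
      exact Reach.of_adj (adj_circ hn u L (by omega) hsmall hLn)

section
variable {n k : ℕ}

lemma val_add_cast [NeZero n] (x : ZMod n) (g : ℕ) :
    (x + (g : ZMod n)).val = (x.val + g) % n := by
  rw [ZMod.val_add, ZMod.val_natCast]
  conv_rhs => rw [Nat.add_mod]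
  rw [Nat.mod_eq_of_lt (ZMod.val_lt x)]

lemma modred {n : ℕ} (hn : 0 < n) (a : ℕ) (h : a < 3 * n) :
    (a % n = a ∧ a < n) ∨ (a % n = a - n ∧ n ≤ a ∧ a < 2 * n) ∨
      (a % n = a - 2 * n ∧ 2 * n ≤ a) := by
  rcases Nat.lt_or_ge a n with h1 | h1
  · exact Or.inl ⟨Nat.mod_eq_of_lt h1, h1⟩
  rw [Nat.mod_eq_sub_mod h1]
  rcases Nat.lt_or_ge (a - n) n with h2 | h2
  · exact Or.inr (Or.inl ⟨Nat.mod_eq_of_lt h2, h1, by omega⟩)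
  rw [Nat.mod_eq_sub_mod h2]
  refine Or.inr (Or.inr ⟨?_, by omega⟩)
  rw [Nat.mod_eq_of_lt (by omega)]
  omega

lemma harary_conn (hk : 2 ≤ k) (hkn : k < n) (S : Set (ZMod n)) (hS : S.ncard < k) :
    (((⊤ : (harary n k).Subgraph).deleteVerts S).coe).Connected := by
  haveI : NeZero n := ⟨by omega⟩
  have hn : 0 < n := by omega
  have hr1 : 1 ≤ k / 2 := by omega
  have hex : ∃ v : ZMod n, v ∉ S := by
    by_contra hc
    push_neg at hc
    have h1 : S = Set.univ := Set.eq_univ_of_forall hc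
    rw [h1, Set.ncard_univ, Nat.card_eq_fintype_card, ZMod.card] at hS
    omega
  obtain ⟨v0, hv0⟩ := hex
  rw [SimpleGraph.connected_iff]
  refine ⟨?_, ⟨⟨v0, mem_delverts hv0⟩⟩⟩
  rintro ⟨x, hx⟩ ⟨y, hy⟩
  have hxS : x ∉ S := hx.2
  have hyS : y ∉ S := hy.2
  by_cases hxy : x = y
  · have : (⟨x, hx⟩ : ((⊤ : (harary n k).Subgraph).deleteVerts S).verts) = ⟨y, hy⟩ :=
      Subtype.ext hxy
    rw [this]
  suffices h : Reach n k S x y by exact h hxS hyS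
  set L := (y - x).val with hLdef
  have hyx : y = x + (L : ZMod n) := by
    rw [hLdef, ZMod.natCast_rightInverse (y - x)]
    ring
  have hL0 : L ≠ 0 := by
    intro h0
    apply hxy
    have h1 : y - x = 0 := by
      rw [← ZMod.val_eq_zero]
      exact h0
    have := sub_eq_zero.mp h1
    exact this.symm
  have hLn : L < n := ZMod.val_lt _
  have hyend : (x + (L : ZMod n)) ∉ S := by rw [← hyx]; exact hyS
  by_cases hfwd : ∀ s : ℕ, s + k / 2 < L →
      ∃ j : ℕ, 1 ≤ j ∧ j ≤ k / 2 ∧ (x + ((s + j : ℕ) : ZMod n)) ∉ S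
  · rw [hyx]
    exact jump hn hr1 L x hxS hL0 hLn hyend hfwd
  by_cases hbwd : ∀ s : ℕ, s + k / 2 < n - L →
      ∃ j : ℕ, 1 ≤ j ∧ j ≤ k / 2 ∧ (y + ((s + j : ℕ) : ZMod n)) ∉ S
  · have hback : y + ((n - L : ℕ) : ZMod n) = x := by
      rw [hyx, add_assoc, ← Nat.cast_add]
      have h1 : L + (n - L) = n := by omega
      rw [h1, ZMod.natCast_self, add_zero]
    have hxend : y + ((n - L : ℕ) : ZMod n) ∉ S := by rw [hback]; exact hxS
    have hj := jump hn hr1 (n - L) y hyS (by omega) (by omega) hxend hbwd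
    rw [hback] at hj
    exact hj.symm'
  push_neg at hfwd hbwd
  obtain ⟨s1, hs1, hB1⟩ := hfwd
  obtain ⟨s2, hs2, hB2⟩ := hbwd
  -- the deleted blocks
  set T : Finset ℕ := Finset.Icc (s1 + 1) (s1 + k / 2) ∪
      Finset.Icc (L + s2 + 1) (L + s2 + k / 2) with hTdef
  have hTmem : ∀ t, t ∈ T ↔ ((s1 + 1 ≤ t ∧ t ≤ s1 + k / 2) ∨
      (L + s2 + 1 ≤ t ∧ t ≤ L + s2 + k / 2)) := by
    intro t
    simp only [hTdef, Finset.mem_union, Finset.mem_Icc]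
  have hTcard : T.card = 2 * (k / 2) := by
    rw [hTdef, Finset.card_union_of_disjoint, Nat.card_Icc, Nat.card_Icc]
    · omega
    · rw [Finset.disjoint_left]
      intro a ha hb
      simp only [Finset.mem_Icc] at ha hb
      omega
  have hTS : ∀ t ∈ T, x + (t : ZMod n) ∈ S := by
    intro t ht
    rw [hTmem] at ht
    rcases ht with ⟨h1, h2⟩ | ⟨h1, h2⟩
    · have := hB1 (t - s1) (by omega) (by omega)
      have he : s1 + (t - s1) = t := by omega
      rwa [he] at this
    · have := hB2 (t - L - s2) (by omega) (by omega)
      have he : s2 + (t - L - s2) = t - L := by omega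
      rw [he] at this
      rw [hyx, add_assoc, ← Nat.cast_add] at this
      have he2 : L + (t - L) = t := by omega
      rwa [he2] at this
  have hinj : ∀ a ∈ T, ∀ b ∈ T, x + (a : ZMod n) = x + (b : ZMod n) → a = b := by
    intro a ha b hb hab
    rw [hTmem] at ha hb
    have h1 : (a : ZMod n) = b := add_left_cancel hab
    rw [ZMod.natCast_eq_natCast_iff, Nat.ModEq, Nat.mod_eq_of_lt (by omega),
      Nat.mod_eq_of_lt (by omega)] at h1
    exact h1
  have hsub : ↑(T.image (fun t : ℕ => x + (t : ZMod n))) ⊆ S := by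
    intro z hz
    simp only [Finset.coe_image, Set.mem_image, Finset.mem_coe] at hz
    obtain ⟨t, ht, rfl⟩ := hz
    exact hTS t ht
  have h2rcard : 2 * (k / 2) ≤ S.ncard := by
    have h1 : (↑(T.image (fun t : ℕ => x + (t : ZMod n))) : Set (ZMod n)).ncard ≤ S.ncard :=
      Set.ncard_le_ncard hsub (Set.toFinite S)
    rwa [Set.ncard_coe_finset, Finset.card_image_of_injOn hinj, hTcard] at h1
  have hk2 : k % 2 = 1 := by omega
  have hSeq : S = ↑(T.image (fun t : ℕ => x + (t : ZMod n))) := by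
    refine (Set.eq_of_subset_of_ncard_le hsub ?_ (Set.toFinite S)).symm
    rw [Set.ncard_coe_finset, Finset.card_image_of_injOn hinj, hTcard]
    omega
  have hmemS : ∀ g : ℕ, (x + (g : ZMod n) ∈ S) ↔
      ((s1 + 1 ≤ g % n ∧ g % n ≤ s1 + k / 2) ∨
       (L + s2 + 1 ≤ g % n ∧ g % n ≤ L + s2 + k / 2)) := by
    intro g
    rw [hSeq]
    simp only [Finset.coe_image, Set.mem_image, Finset.mem_coe]
    constructor
    · rintro ⟨t, ht, heq⟩
      have h1 : (t : ZMod n) = g := add_left_cancel heq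
      rw [ZMod.natCast_eq_natCast_iff, Nat.ModEq] at h1
      rw [hTmem] at ht
      rw [Nat.mod_eq_of_lt (by omega)] at h1
      omega
    · intro hg
      refine ⟨g % n, ?_, ?_⟩
      · rw [hTmem]; omega
      · apply congrArg (fun z => x + z)
        apply casteq
        exact Nat.mod_eq_of_lt (Nat.mod_lt g hn)
  -- arcs
  set b0 := s1 + k / 2 + 1 with hb0def
  set c := L + s2 + k / 2 + 1 with hcdef
  set al := n + s1 + 1 - c with haldef
  set be := L + s2 - s1 - k / 2 with hbedef
  have hcn : c ≤ n := by omega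
  have hal1 : 1 ≤ al := by omega
  have hbe1 : 1 ≤ be := by omega
  have halbe : al + be + 2 * (k / 2) = n := by omega
  have hAnotS : ∀ i, i < al → (x + ((c + i : ℕ) : ZMod n)) ∉ S := by
    intro i hi
    rw [hmemS]
    rcases modred hn (c + i) (by omega) with ⟨h, h'⟩ | ⟨h, h'⟩ | ⟨h, h'⟩ <;> omega
  have hBnotS : ∀ i, i < be → (x + ((b0 + i : ℕ) : ZMod n)) ∉ S := by
    intro i hi
    rw [hmemS]
    rcases modred hn (b0 + i) (by omega) with ⟨h, h'⟩ | ⟨h, h'⟩ | ⟨h, h'⟩ <;> omega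
  have hreachA : ∀ i, i < al → Reach n k S x (x + ((c + i : ℕ) : ZMod n)) := by
    intro i hi
    rcases Nat.lt_or_ge (c + i) n with hcase | hcase
    · have hstart := hAnotS i hi
      have hend : (x + ((c + i : ℕ) : ZMod n)) + ((n - (c + i) : ℕ) : ZMod n) = x := by
        rw [add_assoc, ← Nat.cast_add]
        have h1 : (c + i) + (n - (c + i)) = n := by omega
        rw [h1, ZMod.natCast_self, add_zero]
      have hendS : (x + ((c + i : ℕ) : ZMod n)) + ((n - (c + i) : ℕ) : ZMod n) ∉ S := by
        rw [hend]; exact hxS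
      have hcond : ∀ s : ℕ, s + k / 2 < n - (c + i) →
          ∃ j : ℕ, 1 ≤ j ∧ j ≤ k / 2 ∧
            ((x + ((c + i : ℕ) : ZMod n)) + ((s + j : ℕ) : ZMod n)) ∉ S := by
        intro s hs
        refine ⟨1, le_refl 1, hr1, ?_⟩
        rw [add_assoc, ← Nat.cast_add]
        have h1 : (c + i : ℕ) + (s + 1) = c + i + s + 1 := by omega
        rw [h1, hmemS]
        rcases modred hn (c + i + s + 1) (by omega) with ⟨h, h'⟩ | ⟨h, h'⟩ | ⟨h, h'⟩ <;> omega
      have hj := jump hn hr1 (n - (c + i)) _ hstart (by omega) (by omega) hendS hcond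
      rw [hend] at hj
      exact hj.symm'
    · have heqv : ((c + i : ℕ) : ZMod n) = ((c + i - n : ℕ) : ZMod n) := by
        apply casteq
        have h1 : (c + i) % n = c + i - n := by
          rcases modred hn (c + i) (by omega) with ⟨h, h'⟩ | ⟨h, h'⟩ | ⟨h, h'⟩ <;> omega
        rw [h1, Nat.mod_eq_of_lt (by omega)]
      rcases Nat.eq_zero_or_pos (c + i - n) with h0 | h0
      · have heq0 : x + ((c + i : ℕ) : ZMod n) = x := by
          rw [heqv, h0, Nat.cast_zero, add_zero]
        rw [heq0]
        exact Reach.refl x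
      · have hendS : x + ((c + i - n : ℕ) : ZMod n) ∉ S := by
          rw [← heqv]; exact hAnotS i hi
        have hcond : ∀ s : ℕ, s + k / 2 < c + i - n →
            ∃ j : ℕ, 1 ≤ j ∧ j ≤ k / 2 ∧ (x + ((s + j : ℕ) : ZMod n)) ∉ S := by
          intro s hs
          refine ⟨1, le_refl 1, hr1, ?_⟩
          rw [hmemS]
          rcases modred hn (s + 1) (by omega) with ⟨h, h'⟩ | ⟨h, h'⟩ | ⟨h, h'⟩ <;> omega
        have hj := jump hn hr1 (c + i - n) x hxS (by omega) (by omega) hendS hcond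
        rw [heqv]
        exact hj
  have hreachB : ∀ i, i < be → Reach n k S y (x + ((b0 + i : ℕ) : ZMod n)) := by
    intro i hi
    rcases Nat.lt_or_ge (b0 + i) L with hcase | hcase
    · have hstart := hBnotS i hi
      have hend : (x + ((b0 + i : ℕ) : ZMod n)) + ((L - (b0 + i) : ℕ) : ZMod n) = y := by
        rw [add_assoc, ← Nat.cast_add, hyx]
        have h1 : (b0 + i) + (L - (b0 + i)) = L := by omega
        rw [h1]
      have hendS : (x + ((b0 + i : ℕ) : ZMod n)) + ((L - (b0 + i) : ℕ) : ZMod n) ∉ S := by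
        rw [hend]; exact hyS
      have hcond : ∀ s : ℕ, s + k / 2 < L - (b0 + i) →
          ∃ j : ℕ, 1 ≤ j ∧ j ≤ k / 2 ∧
            ((x + ((b0 + i : ℕ) : ZMod n)) + ((s + j : ℕ) : ZMod n)) ∉ S := by
        intro s hs
        refine ⟨1, le_refl 1, hr1, ?_⟩
        rw [add_assoc, ← Nat.cast_add]
        have h1 : (b0 + i : ℕ) + (s + 1) = b0 + i + s + 1 := by omega
        rw [h1, hmemS]
        rcases modred hn (b0 + i + s + 1) (by omega) with ⟨h, h'⟩ | ⟨h, h'⟩ | ⟨h, h'⟩ <;> omega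
      have hj := jump hn hr1 (L - (b0 + i)) _ hstart (by omega) (by omega) hendS hcond
      rw [hend] at hj
      exact hj.symm'
    · rcases Nat.eq_zero_or_pos (b0 + i - L) with h0 | h0
      · have heq0 : x + ((b0 + i : ℕ) : ZMod n) = y := by
          rw [hyx]
          have h1 : b0 + i = L := by omega
          rw [h1]
        rw [heq0]
        exact Reach.refl y
      · have hend : y + ((b0 + i - L : ℕ) : ZMod n) = x + ((b0 + i : ℕ) : ZMod n) := by
          rw [hyx, add_assoc, ← Nat.cast_add]
          have h1 : L + (b0 + i - L) = b0 + i := by omega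
          rw [h1]
        have hendS : y + ((b0 + i - L : ℕ) : ZMod n) ∉ S := by
          rw [hend]; exact hBnotS i hi
        have hcond : ∀ s : ℕ, s + k / 2 < b0 + i - L →
            ∃ j : ℕ, 1 ≤ j ∧ j ≤ k / 2 ∧ (y + ((s + j : ℕ) : ZMod n)) ∉ S := by
          intro s hs
          refine ⟨1, le_refl 1, hr1, ?_⟩
          rw [hyx, add_assoc, ← Nat.cast_add]
          have h1 : L + (s + 1) = L + s + 1 := by omega
          rw [h1, hmemS]
          rcases modred hn (L + s + 1) (by omega) with ⟨h, h'⟩ | ⟨h, h'⟩ | ⟨h, h'⟩ <;> omega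
        have hj := jump hn hr1 (b0 + i - L) y hyS (by omega) (by omega) hendS hcond
        rw [hend] at hj
        exact hj
  -- gluing and crossing
  have hglue : ∀ ia ib, ia < al → ib < be →
      (harary n k).Adj (x + ((c + ia : ℕ) : ZMod n)) (x + ((b0 + ib : ℕ) : ZMod n)) →
      Reach n k S x y := by
    intro ia ib hia hib hadj
    exact ((hreachA ia hia).trans' (Reach.of_adj hadj) (hAnotS ia hia)).trans'
      ((hreachB ib hib).symm') (hBnotS ib hib)
  have hEq : ∀ A B C : ℕ, (B + C = A ∨ B + C = A + n) →
      (x + (B : ZMod n)) + (C : ZMod n) = x + (A : ZMod n) := by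
    intro A B C h
    rw [add_assoc, ← Nat.cast_add]
    rcases h with h | h
    · rw [h]
    · rw [h, Nat.cast_add, ZMod.natCast_self, add_zero]
  have hX : x.val < n := ZMod.val_lt x
  rcases Nat.even_or_odd n with hne | hno
  · -- n even : diameter chords
    have hn2 : n % 2 = 0 := Nat.even_iff.mp hne
    rcases le_or_gt be al with hba | hba
    · have hia : (al - be) / 2 < al := by omega
      have hQP : (x + ((c + (al - be) / 2 : ℕ) : ZMod n)) + ((n / 2 : ℕ) : ZMod n)
          = x + ((b0 + 0 : ℕ) : ZMod n) := hEq _ _ _ (Or.inr (by omega))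
      refine hglue ((al - be) / 2) 0 hia (by omega) ⟨?_, Or.inr (Or.inl ⟨hk2, hn2, Or.inl hQP.symm⟩)⟩
      rw [← hQP]
      exact ne_add_cast hn _ (d := n / 2) (by omega) (by omega)
    · have hib : (be - al) / 2 < be := by omega
      have hQP : (x + ((c + 0 : ℕ) : ZMod n)) + ((n / 2 : ℕ) : ZMod n)
          = x + ((b0 + (be - al) / 2 : ℕ) : ZMod n) := hEq _ _ _ (Or.inr (by omega))
      refine hglue 0 ((be - al) / 2) (by omega) hib ⟨?_, Or.inr (Or.inl ⟨hk2, hn2, Or.inl hQP.symm⟩)⟩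
      rw [← hQP]
      exact ne_add_cast hn _ (d := n / 2) (by omega) (by omega)
  · -- n odd : anchored chords
    have hn2 : n % 2 = 1 := Nat.odd_iff.mp hno
    have hm1 : 1 ≤ (n - 1) / 2 := by omega
    have hmn : (n - 1) / 2 < n := by omega
    have hrm : k / 2 < (n - 1) / 2 := by omega
    rcases le_or_gt (al + k / 2) ((n - 1) / 2) with hcA | hcA
    · -- witness on the A side, at relative position 0
      rcases le_or_gt ((x.val + (c + 0)) % n) ((n - 1) / 2) with habs | habs
      · -- chord Q = P + m' with P.val ≤ m'
        have hib : (n - 1) / 2 - (al + k / 2) < be := by omega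
        have hQP : (x + ((c + 0 : ℕ) : ZMod n)) + (((n - 1) / 2 : ℕ) : ZMod n)
            = x + ((b0 + ((n - 1) / 2 - (al + k / 2)) : ℕ) : ZMod n) :=
          hEq _ _ _ (Or.inr (by omega))
        have hPval : (x + ((c + 0 : ℕ) : ZMod n)).val ≤ (n - 1) / 2 := by
          rw [val_add_cast]; exact habs
        refine hglue 0 ((n - 1) / 2 - (al + k / 2)) (by omega) hib
          ⟨?_, Or.inr (Or.inr ⟨hk2, hn2, Or.inl ⟨hQP.symm, hPval⟩⟩)⟩
        rw [← hQP]
        exact ne_add_cast hn _ (d := (n - 1) / 2) (by omega) (by omega)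
      · -- chord P = Q + m' with Q.val ≤ m'
        have hib : (n - 1) / 2 + 1 - (al + k / 2) < be := by omega
        have hQP : (x + ((b0 + ((n - 1) / 2 + 1 - (al + k / 2)) : ℕ) : ZMod n))
            + (((n - 1) / 2 : ℕ) : ZMod n) = x + ((c + 0 : ℕ) : ZMod n) :=
          hEq _ _ _ (Or.inl (by omega))
        have hQval : (x + ((b0 + ((n - 1) / 2 + 1 - (al + k / 2)) : ℕ) : ZMod n)).val
            ≤ (n - 1) / 2 := by
          rw [val_add_cast]
          have hrel : (b0 + ((n - 1) / 2 + 1 - (al + k / 2))) + (n - 1) / 2 = c + 0 := by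
            omega
          rcases modred hn (x.val + (c + 0)) (by omega) with ⟨h, h'⟩ | ⟨h, h'⟩ | ⟨h, h'⟩ <;>
            rcases modred hn (x.val + (b0 + ((n - 1) / 2 + 1 - (al + k / 2)))) (by omega) with
              ⟨h2, h2'⟩ | ⟨h2, h2'⟩ | ⟨h2, h2'⟩ <;> omega
        refine hglue 0 ((n - 1) / 2 + 1 - (al + k / 2)) (by omega) hib
          ⟨?_, Or.inr (Or.inr ⟨hk2, hn2, Or.inr ⟨hQP.symm, hQval⟩⟩)⟩
        rw [← hQP]
        exact (ne_add_cast hn _ (d := (n - 1) / 2) (by omega) (by omega)).symm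
    · -- witness on the B side, at relative position 0
      rcases le_or_gt ((x.val + (b0 + 0)) % n) ((n - 1) / 2) with habs | habs
      · -- chord P = Q + m' with Q.val ≤ m'  (Q = B start)
        have hia : al + k / 2 - (n - 1) / 2 - 1 < al := by omega
        have hQP : (x + ((b0 + 0 : ℕ) : ZMod n)) + (((n - 1) / 2 : ℕ) : ZMod n)
            = x + ((c + (al + k / 2 - (n - 1) / 2 - 1) : ℕ) : ZMod n) :=
          hEq _ _ _ (Or.inl (by omega))
        have hQval : (x + ((b0 + 0 : ℕ) : ZMod n)).val ≤ (n - 1) / 2 := by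
          rw [val_add_cast]; exact habs
        refine hglue (al + k / 2 - (n - 1) / 2 - 1) 0 hia (by omega)
          ⟨?_, Or.inr (Or.inr ⟨hk2, hn2, Or.inr ⟨hQP.symm, hQval⟩⟩)⟩
        rw [← hQP]
        exact (ne_add_cast hn _ (d := (n - 1) / 2) (by omega) (by omega)).symm
      · -- chord Q = P + m' with P.val ≤ m'
        have hia : al + k / 2 - (n - 1) / 2 < al := by omega
        have hQP : (x + ((c + (al + k / 2 - (n - 1) / 2) : ℕ) : ZMod n))
            + (((n - 1) / 2 : ℕ) : ZMod n) = x + ((b0 + 0 : ℕ) : ZMod n) :=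
          hEq _ _ _ (Or.inr (by omega))
        have hPval : (x + ((c + (al + k / 2 - (n - 1) / 2) : ℕ) : ZMod n)).val
            ≤ (n - 1) / 2 := by
          rw [val_add_cast]
          have hrel : (c + (al + k / 2 - (n - 1) / 2)) + (n - 1) / 2 = (b0 + 0) + n := by
            omega
          rcases modred hn (x.val + (b0 + 0)) (by omega) with ⟨h, h'⟩ | ⟨h, h'⟩ | ⟨h, h'⟩ <;>
            rcases modred hn (x.val + (c + (al + k / 2 - (n - 1) / 2))) (by omega) with
              ⟨h2, h2'⟩ | ⟨h2, h2'⟩ | ⟨h2, h2'⟩ <;> omega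
        refine hglue (al + k / 2 - (n - 1) / 2) 0 hia (by omega)
          ⟨?_, Or.inr (Or.inr ⟨hk2, hn2, Or.inl ⟨hQP.symm, hPval⟩⟩)⟩
        rw [← hQP]
        exact ne_add_cast hn _ (d := (n - 1) / 2) (by omega) (by omega)

end
/-- `G` is `k`-(vertex-)connected: `G` has more than `k` vertices and removing any set of
fewer than `k` vertices leaves a connected graph. -/
def IsKConnected {V : Type*} [Fintype V] (G : SimpleGraph V) (k : ℕ) : Prop :=
  k < Fintype.card V ∧
    ∀ S : Set V, S.ncard < k → (((⊤ : G.Subgraph).deleteVerts S).coe).Connected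

/-- (Harary, 1962) For all `2 ≤ k < n` there is a `k`-connected graph on `n`
vertices with exactly `⌈kn/2⌉` edges. -/
theorem stmt_6 (n k : ℕ) (hk : 2 ≤ k) (hkn : k < n) :
    ∃ G : SimpleGraph (Fin n), IsKConnected G k ∧ G.edgeSet.ncard = (k * n + 1) / 2 := by
  obtain ⟨m, rfl⟩ : ∃ m, n = m + 1 := ⟨n - 1, by omega⟩
  refine ⟨harary (m + 1) k, ⟨?_, ?_⟩, ?_⟩
  · simpa using hkn
  · exact fun S hS => harary_conn hk hkn S hS
  · exact harary_count hk hkn
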